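/- Let N : V → ℝ≥0 be a quasi-norm on an abelian group V satisfying the doubling property 2·N(x) ≤ N(2·x) + D for all x ∈ V with a fixed constant D ≥ 0. Then N(x) ≤ ‖x‖ + D for all x ∈ V, where ‖·‖ is the homogenisation of N. -/

import Mathlib

open Filter

/-- If a quasi-norm satisfies the doubling property `2·N(x) ≤ N(2·x) + D`, then
`N(x) ≤ ‖x‖ + D`, where `‖·‖` is the homogenisation of `N`. -/
theorem quasinorm_le_homogenisation_add_of_doubling {V : Type*} [AddCommGroup V]
    (N : V → ℝ) (Δ : ℝ) (hΔ : 0 ≤ Δ)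
    (hnonneg : ∀ x, 0 ≤ N x)
    (hposdef : ∀ x, N x = 0 ↔ x = 0)
    (hsymm : ∀ x, N (-x) = N x)
    (htri : ∀ x y, N (x + y) ≤ N x + N y + Δ)
    (D : ℝ) (hD : 0 ≤ D)
    (hdoub : ∀ x : V, 2 * N x ≤ N (2 • x) + D)
    (ν : V → ℝ)
    (hν : ∀ x, Tendsto (fun k : ℕ => N (k • x) / k) atTop (nhds (ν x))) :
    ∀ x : V, N x ≤ ν x + D := by
  intro x
  have key : ∀ k : ℕ, (2 : ℝ) ^ k * N x ≤ N ((2 ^ k : ℕ) • x) + ((2 : ℝ) ^ k - 1) * D := by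
    intro k
    induction k with
    | zero => simp
    | succ k ih =>
      have h1 : (2 : ℝ) ^ (k + 1) * N x ≤ 2 * (N ((2 ^ k : ℕ) • x) + ((2 : ℝ) ^ k - 1) * D) := by
        rw [pow_succ, mul_comm ((2:ℝ)^k) 2, mul_assoc]
        linarith [ih]
      have h2 : 2 * N ((2 ^ k : ℕ) • x) ≤ N ((2 ^ (k + 1) : ℕ) • x) + D := by
        have := hdoub ((2 ^ k : ℕ) • x)
        rw [smul_smul] at this
        have hn : (2 * 2 ^ k : ℕ) = 2 ^ (k + 1) := by ring
        rwa [hn] at this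
      have : ((2:ℝ) ^ (k+1) - 1) * D = 2 * (((2:ℝ)^k - 1) * D) + D := by ring
      linarith
  have hsub : Tendsto (fun k : ℕ => N ((2 ^ k : ℕ) • x) / (2 ^ k : ℕ)) atTop (nhds (ν x)) :=
    (hν x).comp (tendsto_pow_atTop_atTop_of_one_lt (by norm_num))
  have hle : ∀ k : ℕ, N x - D ≤ N ((2 ^ k : ℕ) • x) / (2 ^ k : ℕ) := by
    intro k
    have hpos : (0 : ℝ) < ((2 ^ k : ℕ) : ℝ) := by positivity
    rw [le_div_iff₀ hpos]
    push_cast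
    nlinarith [key k, hnonneg ((2 ^ k : ℕ) • x), hD, pow_pos (by norm_num : (0:ℝ) < 2) k]
  have := le_of_tendsto_of_tendsto' (tendsto_const_nhds (x := N x - D)) hsub hle
  linarith
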